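/- Let E_1,...,E_k be linear subspaces of R^n and c_1,...,c_k > 0 with ∑_{i=1}^k c_i P_{E_i} = I_n. Then for every proper linear subspace V of R^n, ∑_{i=1}^k c_i dim(E_i ∩ V) ≤ dim V, with equality if and only if E_i = (E_i ∩ V) + (E_i ∩ V^⊥) for all i. -/

import Mathlib

open scoped BigOperators RealInnerProductSpace
open Module
open Submodule

noncomputable section StmtAux

lemma projOnto_eq_self_iff {n : ℕ} {K : Submodule ℝ (EuclideanSpace ℝ (Fin n))}
    {v : EuclideanSpace ℝ (Fin n)} :
    (K.orthogonalProjectionOnto v : EuclideanSpace ℝ (Fin n)) = v ↔ v ∈ K := by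
  rw [← starProjection_apply]; exact starProjection_eq_self_iff

lemma traceP {n : ℕ} (W : Submodule ℝ (EuclideanSpace ℝ (Fin n))) :
    ∑ j, ‖(orthogonalProjectionOnto W ((EuclideanSpace.basisFun (Fin n) ℝ) j) :
      EuclideanSpace ℝ (Fin n))‖ ^ 2 = (finrank ℝ W : ℝ) := by
  classical
  set e := EuclideanSpace.basisFun (Fin n) ℝ with he
  set b := stdOrthonormalBasis ℝ W with hb
  have key : ∀ x : EuclideanSpace ℝ (Fin n),
      ‖(orthogonalProjectionOnto W x : EuclideanSpace ℝ (Fin n))‖ ^ 2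
        = ∑ a, ⟪(b a : EuclideanSpace ℝ (Fin n)), x⟫ ^ 2 := by
    intro x
    have h1 : ⟪(orthogonalProjectionOnto W x : W), (orthogonalProjectionOnto W x : W)⟫
        = ∑ a, ⟪(orthogonalProjectionOnto W x : W), b a⟫ * ⟪b a, (orthogonalProjectionOnto W x : W)⟫ :=
      (b.sum_inner_mul_inner _ _).symm
    have h2 : ∀ a, ⟪b a, (orthogonalProjectionOnto W x : W)⟫
        = ⟪(b a : EuclideanSpace ℝ (Fin n)), x⟫ :=
      fun a => inner_orthogonalProjectionOnto_eq_of_mem_left (K := W) (b a) x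
    have h3 : ‖(orthogonalProjectionOnto W x : EuclideanSpace ℝ (Fin n))‖ ^ 2
        = ⟪(orthogonalProjectionOnto W x : W), (orthogonalProjectionOnto W x : W)⟫ := by
      rw [real_inner_self_eq_norm_sq]
      rfl
    rw [h3, h1]
    refine Finset.sum_congr rfl fun a _ => ?_
    rw [← h2 a, real_inner_comm (b a), sq]
  calc ∑ j, ‖(orthogonalProjectionOnto W (e j) : EuclideanSpace ℝ (Fin n))‖ ^ 2
      = ∑ j, ∑ a, ⟪(b a : EuclideanSpace ℝ (Fin n)), e j⟫ ^ 2 :=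
        Finset.sum_congr rfl fun j _ => key (e j)
    _ = ∑ a, ∑ j, ⟪(b a : EuclideanSpace ℝ (Fin n)), e j⟫ ^ 2 := Finset.sum_comm
    _ = ∑ _a : Fin (finrank ℝ W), (1:ℝ) := by
        refine Finset.sum_congr rfl fun a _ => ?_
        have h4 := e.sum_inner_mul_inner (b a : EuclideanSpace ℝ (Fin n))
          (b a : EuclideanSpace ℝ (Fin n))
        have hn : ⟪(b a : EuclideanSpace ℝ (Fin n)), (b a : EuclideanSpace ℝ (Fin n))⟫ = 1 := by
          rw [real_inner_self_eq_norm_sq]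
          have : ‖b a‖ = 1 := b.orthonormal.1 a
          rw [show ‖(b a : EuclideanSpace ℝ (Fin n))‖ = ‖b a‖ from rfl, this]; norm_num
        rw [← hn, ← h4]
        exact Finset.sum_congr rfl fun j _ => by rw [sq, real_inner_comm (e j) _]
    _ = (finrank ℝ W : ℝ) := by simp

lemma Q_iff_split {n : ℕ} (Ei V : Submodule ℝ (EuclideanSpace ℝ (Fin n))) :
    (∀ v ∈ V, (orthogonalProjectionOnto Ei v : EuclideanSpace ℝ (Fin n)) ∈ V)
      ↔ Ei = (Ei ⊓ V) ⊔ (Ei ⊓ Vᗮ) := by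
  constructor
  · intro hQ
    refine le_antisymm ?_ (sup_le inf_le_left inf_le_left)
    intro x hx
    have hxE : (orthogonalProjectionOnto Ei x : EuclideanSpace ℝ (Fin n)) = x :=
      projOnto_eq_self_iff.mpr hx
    have hw : (x - (orthogonalProjectionOnto V x : EuclideanSpace ℝ (Fin n))) ∈ Vᗮ :=
      sub_starProjection_mem_orthogonal (K := V) x
    have hx2 : x = (orthogonalProjectionOnto Ei (orthogonalProjectionOnto V x : EuclideanSpace ℝ (Fin n))
          : EuclideanSpace ℝ (Fin n))
        + (orthogonalProjectionOnto Ei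
            (x - (orthogonalProjectionOnto V x : EuclideanSpace ℝ (Fin n)))
          : EuclideanSpace ℝ (Fin n)) := by
      have h9 := map_add (orthogonalProjectionOnto Ei)
        ((orthogonalProjectionOnto V x : EuclideanSpace ℝ (Fin n)))
        (x - (orthogonalProjectionOnto V x : EuclideanSpace ℝ (Fin n)))
      calc x = (orthogonalProjectionOnto Ei x : EuclideanSpace ℝ (Fin n)) := hxE.symm
        _ = (orthogonalProjectionOnto Ei
              ((orthogonalProjectionOnto V x : EuclideanSpace ℝ (Fin n))
                + (x - (orthogonalProjectionOnto V x : EuclideanSpace ℝ (Fin n))))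
            : EuclideanSpace ℝ (Fin n)) := by
            rw [show (orthogonalProjectionOnto V x : EuclideanSpace ℝ (Fin n))
              + (x - (orthogonalProjectionOnto V x : EuclideanSpace ℝ (Fin n))) = x from by abel]
        _ = _ := by rw [h9]; rfl
    have ha : (orthogonalProjectionOnto Ei (orthogonalProjectionOnto V x : EuclideanSpace ℝ (Fin n))
        : EuclideanSpace ℝ (Fin n)) ∈ Ei ⊓ V :=
      Submodule.mem_inf.mpr ⟨Submodule.coe_mem _, hQ _ (Submodule.coe_mem _)⟩
    have hb : (orthogonalProjectionOnto Ei
        (x - (orthogonalProjectionOnto V x : EuclideanSpace ℝ (Fin n)))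
        : EuclideanSpace ℝ (Fin n)) ∈ Ei ⊓ Vᗮ := by
      refine Submodule.mem_inf.mpr ⟨Submodule.coe_mem _, (Submodule.mem_orthogonal V _).mpr ?_⟩
      intro u hu
      have h5 : ⟪(orthogonalProjectionOnto Ei u : EuclideanSpace ℝ (Fin n)),
          x - (orthogonalProjectionOnto V x : EuclideanSpace ℝ (Fin n))⟫
          = ⟪u, (orthogonalProjectionOnto Ei
              (x - (orthogonalProjectionOnto V x : EuclideanSpace ℝ (Fin n)))
            : EuclideanSpace ℝ (Fin n))⟫ :=
        inner_starProjection_left_eq_right Ei u _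
      rw [← h5]
      exact (Submodule.mem_orthogonal V _).mp hw _ (hQ u hu)
    rw [hx2]
    exact Submodule.add_mem_sup ha hb
  · intro hsplit v hv
    have hmem : (orthogonalProjectionOnto Ei v : EuclideanSpace ℝ (Fin n)) ∈ (Ei ⊓ V) ⊔ (Ei ⊓ Vᗮ) := by
      rw [← hsplit]; exact Submodule.coe_mem _
    obtain ⟨a, ha, b, hb, hab⟩ := Submodule.mem_sup.mp hmem
    have haV : a ∈ V := (Submodule.mem_inf.mp ha).2
    have hbE : b ∈ Ei := (Submodule.mem_inf.mp hb).1
    have hbVp : b ∈ Vᗮ := (Submodule.mem_inf.mp hb).2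
    have h1 : ⟪(orthogonalProjectionOnto Ei v : EuclideanSpace ℝ (Fin n)), b⟫ = 0 := by
      have h2 : ⟪(orthogonalProjectionOnto Ei v : EuclideanSpace ℝ (Fin n)), b⟫
          = ⟪v, (orthogonalProjectionOnto Ei b : EuclideanSpace ℝ (Fin n))⟫ :=
        inner_starProjection_left_eq_right Ei v b
      rw [h2, projOnto_eq_self_iff.mpr hbE]
      exact (Submodule.mem_orthogonal V b).mp hbVp v hv
    have h3 : ⟪a, b⟫ = 0 := (Submodule.mem_orthogonal V b).mp hbVp a haV
    have hba : b = (orthogonalProjectionOnto Ei v : EuclideanSpace ℝ (Fin n)) - a := by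
      rw [← hab]; abel
    have h4 : ⟪b, b⟫ = 0 := by
      nth_rewrite 1 [hba]
      rw [inner_sub_left, h1, h3]; ring
    have hb0 : b = 0 := inner_self_eq_zero.mp h4
    have hPa : (orthogonalProjectionOnto Ei v : EuclideanSpace ℝ (Fin n)) = a := by
      rw [← hab, hb0, add_zero]
    rw [hPa]; exact haV

end StmtAux

set_option maxHeartbeats 1000000 in
theorem stmt10 {n k : ℕ} (E : Fin k → Submodule ℝ (EuclideanSpace ℝ (Fin n)))
    (c : Fin k → ℝ) (hc : ∀ i, 0 < c i)
    (hBL : ∀ x : EuclideanSpace ℝ (Fin n),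
      ∑ i, c i • ((orthogonalProjectionOnto (E i) x : EuclideanSpace ℝ (Fin n))) = x)
    (V : Submodule ℝ (EuclideanSpace ℝ (Fin n))) (hV : V ≠ ⊤) :
    (∑ i, c i * (Module.finrank ℝ ↥(E i ⊓ V) : ℝ)) ≤ (Module.finrank ℝ V : ℝ) ∧
      ((∑ i, c i * (Module.finrank ℝ ↥(E i ⊓ V) : ℝ)) = (Module.finrank ℝ V : ℝ) ↔
        ∀ i, E i = (E i ⊓ V) ⊔ (E i ⊓ Vᗮ)) := by
  classical
  set e := EuclideanSpace.basisFun (Fin n) ℝ with he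
  set t : Fin k → ℝ := fun i => ∑ j, ‖(orthogonalProjectionOnto (E i)
    (orthogonalProjectionOnto V (e j) : EuclideanSpace ℝ (Fin n)) : EuclideanSpace ℝ (Fin n))‖ ^ 2
    with ht
  set d : Fin k → ℝ := fun i => (finrank ℝ ↥(E i ⊓ V) : ℝ) with hd
  have htdef : ∀ i, t i = ∑ j, ‖(orthogonalProjectionOnto (E i)
      (orthogonalProjectionOnto V (e j) : EuclideanSpace ℝ (Fin n))
      : EuclideanSpace ℝ (Fin n))‖ ^ 2 := fun i => rfl
  have hddef : ∀ i, d i = (finrank ℝ ↥(E i ⊓ V) : ℝ) := fun i => rfl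
  have hPr : ∀ (W : Submodule ℝ (EuclideanSpace ℝ (Fin n))) (v : EuclideanSpace ℝ (Fin n)),
      ⟪(orthogonalProjectionOnto W v : EuclideanSpace ℝ (Fin n)), v⟫
        = ‖(orthogonalProjectionOnto W v : EuclideanSpace ℝ (Fin n))‖ ^ 2 := by
    intro W v
    have h := inner_orthogonalProjectionOnto_eq_of_mem_left (K := W) (orthogonalProjectionOnto W v) v
    rw [← h, real_inner_self_eq_norm_sq]
    rfl
  have h1 : ∀ v : EuclideanSpace ℝ (Fin n), ‖v‖ ^ 2
      = ∑ i, c i * ‖(orthogonalProjectionOnto (E i) v : EuclideanSpace ℝ (Fin n))‖ ^ 2 := by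
    intro v
    calc ‖v‖ ^ 2
        = ⟪(∑ i, c i • (orthogonalProjectionOnto (E i) v : EuclideanSpace ℝ (Fin n))), v⟫ := by
          rw [hBL v, real_inner_self_eq_norm_sq]
      _ = ∑ i, c i * ⟪(orthogonalProjectionOnto (E i) v : EuclideanSpace ℝ (Fin n)), v⟫ := by
          rw [sum_inner]
          exact Finset.sum_congr rfl fun i _ => real_inner_smul_left _ _ _
      _ = ∑ i, c i * ‖(orthogonalProjectionOnto (E i) v : EuclideanSpace ℝ (Fin n))‖ ^ 2 :=
          Finset.sum_congr rfl fun i _ => by rw [hPr]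
  have hstep1 : (finrank ℝ ↥V : ℝ) = ∑ i, c i * t i := by
    rw [← traceP V]
    calc ∑ j, ‖(orthogonalProjectionOnto V (e j) : EuclideanSpace ℝ (Fin n))‖ ^ 2
        = ∑ j, ∑ i, c i * ‖(orthogonalProjectionOnto (E i)
            (orthogonalProjectionOnto V (e j) : EuclideanSpace ℝ (Fin n))
            : EuclideanSpace ℝ (Fin n))‖ ^ 2 :=
          Finset.sum_congr rfl fun j _ => h1 _
      _ = ∑ i, ∑ j, c i * ‖(orthogonalProjectionOnto (E i)
            (orthogonalProjectionOnto V (e j) : EuclideanSpace ℝ (Fin n))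
            : EuclideanSpace ℝ (Fin n))‖ ^ 2 := Finset.sum_comm
      _ = ∑ i, c i * t i := Finset.sum_congr rfl fun i _ => by
            rw [htdef i, Finset.mul_sum]
  have hcompV : ∀ (i : Fin k) (x : EuclideanSpace ℝ (Fin n)),
      (orthogonalProjectionOnto (E i ⊓ V) (orthogonalProjectionOnto V x : EuclideanSpace ℝ (Fin n)))
        = orthogonalProjectionOnto (E i ⊓ V) x :=
    fun i x => orthogonalProjectionOnto_starProjection_of_le inf_le_right x
  have hcompE : ∀ (i : Fin k) (y : EuclideanSpace ℝ (Fin n)),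
      (orthogonalProjectionOnto (E i ⊓ V) (orthogonalProjectionOnto (E i) y : EuclideanSpace ℝ (Fin n)))
        = orthogonalProjectionOnto (E i ⊓ V) y :=
    fun i y => orthogonalProjectionOnto_starProjection_of_le inf_le_left y
  have hstep2 : ∀ i, d i = ∑ j, ‖(orthogonalProjectionOnto (E i ⊓ V)
      (orthogonalProjectionOnto V (e j) : EuclideanSpace ℝ (Fin n))
      : EuclideanSpace ℝ (Fin n))‖ ^ 2 := by
    intro i
    rw [hddef i, ← traceP (E i ⊓ V)]
    exact Finset.sum_congr rfl fun j _ => by rw [hcompV i (e j)]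
  have hpyth : ∀ (i : Fin k) (y : EuclideanSpace ℝ (Fin n)),
      ‖(orthogonalProjectionOnto (E i) y : EuclideanSpace ℝ (Fin n))‖ ^ 2
        = ‖(orthogonalProjectionOnto (E i ⊓ V) y : EuclideanSpace ℝ (Fin n))‖ ^ 2
          + ‖(orthogonalProjectionOnto (E i ⊓ V)ᗮ
              (orthogonalProjectionOnto (E i) y : EuclideanSpace ℝ (Fin n))
              : EuclideanSpace ℝ (Fin n))‖ ^ 2 := by
    intro i y
    have h10 := norm_sq_eq_add_norm_sq_projection
      ((orthogonalProjectionOnto (E i) y : EuclideanSpace ℝ (Fin n))) (E i ⊓ V)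
    rw [hcompE i y] at h10
    simpa using h10
  have hle : ∀ i, d i ≤ t i := by
    intro i
    rw [hstep2 i, htdef i]
    refine Finset.sum_le_sum fun j _ => ?_
    rw [hpyth i]
    exact le_add_of_nonneg_right (by positivity)
  have heqiff : ∀ i, d i = t i ↔
      (∀ v ∈ V, (orthogonalProjectionOnto (E i) v : EuclideanSpace ℝ (Fin n)) ∈ V) := by
    intro i
    constructor
    · intro hdt
      have hzero : ∀ j, (orthogonalProjectionOnto (E i ⊓ V)ᗮ
          (orthogonalProjectionOnto (E i)
            (orthogonalProjectionOnto V (e j) : EuclideanSpace ℝ (Fin n))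
            : EuclideanSpace ℝ (Fin n)) : EuclideanSpace ℝ (Fin n)) = 0 := by
        have hsum : ∑ j, ‖(orthogonalProjectionOnto (E i ⊓ V)ᗮ
            (orthogonalProjectionOnto (E i)
              (orthogonalProjectionOnto V (e j) : EuclideanSpace ℝ (Fin n))
              : EuclideanSpace ℝ (Fin n)) : EuclideanSpace ℝ (Fin n))‖ ^ 2 = 0 := by
          have h6 : t i - d i = ∑ j, ‖(orthogonalProjectionOnto (E i ⊓ V)ᗮ
              (orthogonalProjectionOnto (E i)
                (orthogonalProjectionOnto V (e j) : EuclideanSpace ℝ (Fin n))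
                : EuclideanSpace ℝ (Fin n)) : EuclideanSpace ℝ (Fin n))‖ ^ 2 := by
            rw [htdef i, hstep2 i, ← Finset.sum_sub_distrib]
            exact Finset.sum_congr rfl fun j _ => by rw [hpyth i]; ring
          rw [← h6, hdt, sub_self]
        intro j
        have h7 := (Finset.sum_eq_zero_iff_of_nonneg
          (fun j _ => by positivity)).mp hsum j (Finset.mem_univ j)
        exact norm_eq_zero.mp (sq_eq_zero_iff.mp h7)
      have hAB : ∀ x : EuclideanSpace ℝ (Fin n),
          (orthogonalProjectionOnto (E i) (orthogonalProjectionOnto V x : EuclideanSpace ℝ (Fin n))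
            : EuclideanSpace ℝ (Fin n))
          = (orthogonalProjectionOnto (E i ⊓ V) x : EuclideanSpace ℝ (Fin n)) := by
        have hbasis : ∀ j, (orthogonalProjectionOnto (E i)
            (orthogonalProjectionOnto V (e j) : EuclideanSpace ℝ (Fin n))
            : EuclideanSpace ℝ (Fin n))
            = (orthogonalProjectionOnto (E i ⊓ V) (e j) : EuclideanSpace ℝ (Fin n)) := by
          intro j
          have hmem : (orthogonalProjectionOnto (E i)
              (orthogonalProjectionOnto V (e j) : EuclideanSpace ℝ (Fin n))
              : EuclideanSpace ℝ (Fin n)) ∈ E i ⊓ V := by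
            have h7 := hzero j
            have h7' := ZeroMemClass.coe_eq_zero.mp h7
            rw [orthogonalProjectionOnto_eq_zero_iff] at h7'
            rwa [Submodule.orthogonal_orthogonal] at h7'
          have h8 : (orthogonalProjectionOnto (E i ⊓ V)
              (orthogonalProjectionOnto (E i)
                (orthogonalProjectionOnto V (e j) : EuclideanSpace ℝ (Fin n))
                : EuclideanSpace ℝ (Fin n)) : EuclideanSpace ℝ (Fin n))
              = (orthogonalProjectionOnto (E i)
                (orthogonalProjectionOnto V (e j) : EuclideanSpace ℝ (Fin n))
                : EuclideanSpace ℝ (Fin n)) :=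
            projOnto_eq_self_iff.mpr hmem
          rw [← h8, hcompE i, hcompV i]
        intro x
        let A : EuclideanSpace ℝ (Fin n) →ₗ[ℝ] EuclideanSpace ℝ (Fin n) :=
          ((E i).subtype.comp (orthogonalProjectionOnto (E i)).toLinearMap).comp
            (V.subtype.comp (orthogonalProjectionOnto V).toLinearMap)
        let B : EuclideanSpace ℝ (Fin n) →ₗ[ℝ] EuclideanSpace ℝ (Fin n) :=
          (E i ⊓ V).subtype.comp (orthogonalProjectionOnto (E i ⊓ V)).toLinearMap
        have hABlin : A = B := by
          apply e.toBasis.ext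
          intro j
          simpa [A, B] using hbasis j
        have h11 := congrFun (congrArg (fun f : EuclideanSpace ℝ (Fin n) →ₗ[ℝ]
          EuclideanSpace ℝ (Fin n) => (f : EuclideanSpace ℝ (Fin n) →
          EuclideanSpace ℝ (Fin n))) hABlin) x
        simpa [A, B] using h11
      intro v hv
      have h12 := hAB v
      rw [projOnto_eq_self_iff.mpr hv] at h12
      rw [h12]
      exact (Submodule.mem_inf.mp (Submodule.coe_mem
        (orthogonalProjectionOnto (E i ⊓ V) v))).2
    · intro hQ
      rw [hstep2 i, htdef i]
      refine Finset.sum_congr rfl fun j _ => ?_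
      have hmem : (orthogonalProjectionOnto (E i)
          (orthogonalProjectionOnto V (e j) : EuclideanSpace ℝ (Fin n))
          : EuclideanSpace ℝ (Fin n)) ∈ E i ⊓ V :=
        Submodule.mem_inf.mpr ⟨Submodule.coe_mem _, hQ _ (Submodule.coe_mem _)⟩
      have h8 : (orthogonalProjectionOnto (E i ⊓ V)
          (orthogonalProjectionOnto V (e j) : EuclideanSpace ℝ (Fin n))
          : EuclideanSpace ℝ (Fin n))
          = (orthogonalProjectionOnto (E i)
            (orthogonalProjectionOnto V (e j) : EuclideanSpace ℝ (Fin n))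
            : EuclideanSpace ℝ (Fin n)) := by
        conv_lhs => rw [← hcompE i (orthogonalProjectionOnto V (e j) : EuclideanSpace ℝ (Fin n))]
        rw [projOnto_eq_self_iff.mpr hmem]
      rw [h8]
  have hcle : ∀ i ∈ Finset.univ, c i * d i ≤ c i * t i :=
    fun i _ => mul_le_mul_of_nonneg_left (hle i) (hc i).le
  constructor
  · rw [hstep1]
    exact Finset.sum_le_sum hcle
  · rw [hstep1, Finset.sum_eq_sum_iff_of_le hcle]
    constructor
    · intro h i
      have h13 := h i (Finset.mem_univ i)
      have hdt : d i = t i := mul_left_cancel₀ (ne_of_gt (hc i)) h13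
      exact (Q_iff_split (E i) V).mp ((heqiff i).mp hdt)
    · intro h i _
      have hdt : d i = t i := (heqiff i).mpr
        (fun v hv => (Q_iff_split (E i) V).mpr (h i) v hv)
      rw [hdt]
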